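/- Let P, Q, R, S, P', Q', R', S' be polynomials over 𝔽₂ = ZMod 2 and write, for a polynomial F, F₂ := F.comp(X^2) ∈ (ZMod 2)[X]. If (P₂ + Q₂·X)·(R'₂ + S'₂·X) = (P'₂ + Q'₂·X)·(R₂ + S₂·X) in (ZMod 2)[X], then both (P·R + Q·S·X)·(R'₂ + S'₂·X) = (P'·R' + Q'·S'·X)·(R₂ + S₂·X) and (P·S + Q·R)·(R'₂ + S'₂·X) = (P'·S' + Q'·R')·(R₂ + S₂·X) hold in (ZMod 2)[X]. -/

import Mathlib

open Polynomial

lemma comp_sq (F : (ZMod 2)[X]) : F.comp (X ^ 2) = F ^ 2 := by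
  have h := map_frobenius_expand (p := 2) F
  rw [ZMod.frobenius_zmod, Polynomial.map_id] at h
  rw [← expand_eq_comp_X_pow, h]

lemma two_eq_zero' : (2 : (ZMod 2)[X]) = 0 := by
  rw [show (2 : (ZMod 2)[X]) = C 2 from (map_ofNat C 2).symm, show (2 : ZMod 2) = 0 from rfl, map_zero]

lemma even_odd (A B : (ZMod 2)[X]) (h : A ^ 2 = B ^ 2 * X) : A = 0 ∧ B = 0 := by
  by_cases hB : B = 0
  · refine ⟨?_, hB⟩
    have hA2 : A ^ 2 = 0 := by rw [h, hB]; ring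
    exact pow_eq_zero_iff (n := 2) (by norm_num) |>.mp hA2
  · exfalso
    have hA : A ≠ 0 := by
      intro hA0
      apply hB
      have h0 : B ^ 2 * X = 0 := by rw [← h, hA0]; ring
      rcases mul_eq_zero.mp h0 with h1 | h1
      · exact pow_eq_zero_iff (n := 2) (by norm_num) |>.mp h1
      · exact absurd h1 X_ne_zero
    have hd := congrArg natDegree h
    rw [natDegree_pow, natDegree_mul (pow_ne_zero _ hB) X_ne_zero, natDegree_pow,
      natDegree_X] at hd
    omega

lemma split_eq (A B C D : (ZMod 2)[X]) (h : A ^ 2 + B ^ 2 * X = C ^ 2 + D ^ 2 * X) :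
    A = C ∧ B = D := by
  have h2 := two_eq_zero'
  have key : (A + C) ^ 2 = (B + D) ^ 2 * X := by
    linear_combination h + (A * C + C ^ 2 - B ^ 2 * X - B * D * X) * h2
  obtain ⟨h1, h3⟩ := even_odd _ _ key
  exact ⟨by linear_combination h1 - C * h2, by linear_combination h3 - D * h2⟩

theorem stmt14 (P Q R S P' Q' R' S' : (ZMod 2)[X])
    (h : (P.comp (X ^ 2) + Q.comp (X ^ 2) * X) * (R'.comp (X ^ 2) + S'.comp (X ^ 2) * X) =
         (P'.comp (X ^ 2) + Q'.comp (X ^ 2) * X) * (R.comp (X ^ 2) + S.comp (X ^ 2) * X)) :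
    (P * R + Q * S * X) * (R'.comp (X ^ 2) + S'.comp (X ^ 2) * X) =
      (P' * R' + Q' * S' * X) * (R.comp (X ^ 2) + S.comp (X ^ 2) * X) ∧
    (P * S + Q * R) * (R'.comp (X ^ 2) + S'.comp (X ^ 2) * X) =
      (P' * S' + Q' * R') * (R.comp (X ^ 2) + S.comp (X ^ 2) * X) := by
  simp only [comp_sq] at h ⊢
  have h2 := two_eq_zero'
  have h' : (P * R' + Q * S' * X) ^ 2 + (P * S' + Q * R') ^ 2 * X =
      (P' * R + Q' * S * X) ^ 2 + (P' * S + Q' * R) ^ 2 * X := by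
    linear_combination h + (2 * P * Q * R' * S' * X - 2 * P' * Q' * R * S * X) * h2
  obtain ⟨e1, e2⟩ := split_eq _ _ _ _ h'
  constructor
  · linear_combination (R * R' + S * S' * X) * e1 + (R * S' + S * R') * X * e2 +
      (R * S * Q' * R' * X + R * S * P' * S' * X - Q * R * R' * S' * X - P * S * R' * S' * X) * h2
  · linear_combination (R * S' + S * R') * e1 + (R * R' + S * S' * X) * e2 +
      (R * S * Q' * S' * X + R * S * P' * R' - Q * S * R' * S' * X - P * R * R' * S') * h2
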